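/- Let A be a henselian local ring with maximal ideal m and algebraically closed residue field k, let V be a finite free A-module, and let g : V → V be an invertible A-linear endomorphism. Then there exist invertible A-linear endomorphisms t, u : V → V such that g = t·u, t and u commute, t is a polynomial in g with zero constant term, and the reductions t̄, ū modulo m give the multiplicative Jordan decomposition of ḡ (i.e., t̄ is diagonalizable, ū is unipotent, and ḡ = t̄·ū). -/

import Mathlib

open scoped TensorProduct

open Polynomial

private lemma aux_isUnit_iff_det' {R M : Type*} [CommRing R] [AddCommGroup M] [Module R M]
    [Module.Free R M] [Module.Finite R M] (f : Module.End R M) :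
    IsUnit f ↔ IsUnit (LinearMap.det f) := by
  refine ⟨LinearMap.isUnit_det f, fun h => ?_⟩
  let b := Module.Free.chooseBasis R M
  have hm : IsUnit (LinearMap.toMatrixAlgEquiv b f) := by
    rw [Matrix.isUnit_iff_isUnit_det]
    have hb : (LinearMap.toMatrixAlgEquiv b f) = LinearMap.toMatrix b b f := rfl
    rw [hb, LinearMap.det_toMatrix]
    exact h
  have := hm.map (LinearMap.toMatrixAlgEquiv b).symm
  simpa using this

private lemma aux_minpoly_coeff_zero_ne_zero' {K : Type*} [Field K] {W : Type*} [AddCommGroup W]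
    [Module K W] [FiniteDimensional K W] {f : Module.End K W} (hf : IsUnit f) :
    (minpoly K f).coeff 0 ≠ 0 := by
  intro h0
  obtain ⟨r, hr⟩ := (Polynomial.X_dvd_iff).mpr h0
  have hμ : aeval f (minpoly K f) = 0 := minpoly.aeval K f
  rw [hr, map_mul, aeval_X] at hμ
  have hr0 : aeval f r = 0 := hf.mul_left_cancel (a := f) (by rw [hμ, mul_zero])
  have hrne : r ≠ 0 := by
    rintro rfl
    exact minpoly.ne_zero_of_finite K f (by simpa using hr)
  have hle : (minpoly K f).natDegree ≤ r.natDegree :=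
    Polynomial.natDegree_le_of_dvd (minpoly.dvd K f hr0) hrne
  have hdeg : (minpoly K f).natDegree = 1 + r.natDegree := by
    rw [hr, Polynomial.natDegree_mul Polynomial.X_ne_zero hrne, Polynomial.natDegree_X]
  omega

/-- Relative multiplicative Jordan decomposition over a henselian local ring with
algebraically closed residue field: any invertible endomorphism `g` of a finite free
module factors as `g = t * u` with `t, u` invertible and commuting, `t` a polynomial in
`g` with zero constant term, and the reductions of `t` and `u` modulo the maximal ideal
giving the multiplicative Jordan decomposition of the reduction of `g`. -/
theorem stmt_8 {A : Type*} [CommRing A] [HenselianLocalRing A]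
    [IsAlgClosed (IsLocalRing.ResidueField A)]
    {V : Type*} [AddCommGroup V] [Module A V] [Module.Free A V] [Module.Finite A V]
    (g : Module.End A V) (hg : IsUnit g) :
    ∃ t u : Module.End A V,
      IsUnit t ∧ IsUnit u ∧ g = t * u ∧ Commute t u ∧
      (∃ p : Polynomial A, p.coeff 0 = 0 ∧ t = Polynomial.aeval g p) ∧
      (⨆ μ : IsLocalRing.ResidueField A,
        Module.End.eigenspace (LinearMap.baseChange (IsLocalRing.ResidueField A) t) μ) = ⊤ ∧
      IsNilpotent (LinearMap.baseChange (IsLocalRing.ResidueField A) u - 1) ∧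
      LinearMap.baseChange (IsLocalRing.ResidueField A) g =
        LinearMap.baseChange (IsLocalRing.ResidueField A) t *
          LinearMap.baseChange (IsLocalRing.ResidueField A) u := by
  classical
  set k := IsLocalRing.ResidueField A with hk
  let φ : Module.End A V →ₐ[A] Module.End k (k ⊗[A] V) := Module.End.baseChangeHom A k V
  have hφ : ∀ f : Module.End A V, φ f = LinearMap.baseChange k f := fun _ => rfl
  set gbar : Module.End k (k ⊗[A] V) := LinearMap.baseChange k g with hgbardef
  have hgbaru : IsUnit gbar := hg.map φ
  letI : Ring (Module.End k (k ⊗[A] V)) := inferInstance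
  -- Jordan–Chevalley decomposition of `gbar` over the residue field
  obtain ⟨n, hn_mem, s, hs_mem, hn_nil, hs_ss, hsum⟩ :=
    Module.End.exists_isNilpotent_isSemisimple (K := k) (V := k ⊗[A] V) (f := gbar)
  rw [Algebra.adjoin_singleton_eq_range_aeval] at hs_mem
  obtain ⟨q, hq0⟩ := hs_mem
  have hq : aeval gbar q = s := hq0
  -- commutation facts over the residue field
  have comm_aeval : ∀ p1 p2 : k[X], Commute (aeval gbar p1) (aeval gbar p2) := by
    intro p1 p2
    show _ = _
    rw [← map_mul, ← map_mul, mul_comm]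
  have hcomm_gs : Commute gbar s := by
    have := comm_aeval X q
    rwa [aeval_X, hq] at this
  have hn_eq : n = gbar - s := by rw [hsum]; abel
  have hcomm_sn : Commute s n := by
    rw [hn_eq]
    exact (hcomm_gs.symm.sub_right (Commute.refl s))
  -- the semisimple part is a unit
  have hcomm_gn : Commute gbar n := by
    rw [hn_eq]
    exact (Commute.refl gbar).sub_right hcomm_gs
  have hsu : IsUnit s := by
    have hs_eq : s = gbar + -n := by rw [hn_eq]; abel
    rw [hs_eq]
    exact IsNilpotent.isUnit_add_left_of_commute hn_nil.neg hgbaru hcomm_gn.symm.neg_left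
  -- adjust `q` to have zero constant term
  have hμ0 : (minpoly k gbar).coeff 0 ≠ 0 := aux_minpoly_coeff_zero_ne_zero' hgbaru
  set q' : k[X] := q - C (q.coeff 0 / (minpoly k gbar).coeff 0) * minpoly k gbar with hq'def
  have hq'0 : q'.coeff 0 = 0 := by
    simp [hq'def, Polynomial.coeff_sub, Polynomial.coeff_C_mul, div_mul_cancel₀ _ hμ0]
  have hq's : aeval gbar q' = s := by
    rw [hq'def, map_sub, map_mul, minpoly.aeval, mul_zero, sub_zero, hq]
  -- lift `q'` to `A[X]` with zero constant term
  have hres : Function.Surjective (algebraMap A k) := Ideal.Quotient.mk_surjective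
  obtain ⟨P₀, hP₀⟩ := Polynomial.map_surjective (algebraMap A k) hres q'
  set P : A[X] := P₀ - C (P₀.coeff 0) with hPdef
  have hP0 : P.coeff 0 = 0 := by simp [hPdef]
  have hPmap : P.map (algebraMap A k) = q' := by
    have h0 : algebraMap A k (P₀.coeff 0) = 0 := by
      have hcm := Polynomial.coeff_map (algebraMap A k) 0 (p := P₀)
      rw [hP₀] at hcm
      rw [← hcm, hq'0]
    rw [hPdef, Polynomial.map_sub, hP₀, Polynomial.map_C, h0, map_zero, sub_zero]
  set t : Module.End A V := aeval g P with htdef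
  -- the reduction of `t` is `s`
  have hφt : LinearMap.baseChange k t = s := by
    rw [htdef, ← hφ, ← Polynomial.aeval_algHom_apply φ g P, hφ, ← hgbardef,
      ← aeval_map_algebraMap k gbar P, hPmap, hq's]
  -- `t` is a unit
  have ht : IsUnit t := by
    rw [aux_isUnit_iff_det' t]
    by_contra hcon
    have hmem : LinearMap.det t ∈ IsLocalRing.maximalIdeal A := hcon
    have hz : algebraMap A k (LinearMap.det t) = 0 :=
      (Ideal.Quotient.eq_zero_iff_mem).mpr hmem
    have hdet : IsUnit (algebraMap A k (LinearMap.det t)) := by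
      rw [← LinearMap.det_baseChange, hφt]
      exact LinearMap.isUnit_det s hsu
    exact hdet.ne_zero hz
  -- define `u`
  set u : Module.End A V := ↑ht.unit⁻¹ * g with hudef
  have hu : IsUnit u := (ht.unit⁻¹).isUnit.mul hg
  have hg_eq : g = t * u := by
    rw [hudef, ← mul_assoc, IsUnit.mul_val_inv, one_mul]
  -- commutation over `A`
  have hcomm_tg : Commute t g := by
    have : Commute (aeval g P) (aeval g (X : A[X])) := by
      show _ = _
      rw [← map_mul, ← map_mul, mul_comm]
    rwa [aeval_X] at this
  have hcomm_tu : Commute t u := by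
    have h1 : Commute t ↑ht.unit := by rw [ht.unit_spec]
    exact (h1.units_inv_right).mul_right hcomm_tg
  -- set up the unit `su` over the residue field
  set su : (Module.End k (k ⊗[A] V))ˣ :=
    Units.map (φ : Module.End A V →* Module.End k (k ⊗[A] V)) ht.unit with hsudef
  have hsucoe : (↑su : Module.End k (k ⊗[A] V)) = s := by
    rw [hsudef]
    show φ ↑ht.unit = s
    rw [ht.unit_spec, hφ, hφt]
  have hsuinv : (↑su⁻¹ : Module.End k (k ⊗[A] V)) = φ ↑ht.unit⁻¹ := by
    rw [hsudef]
    exact Units.coe_map_inv _ ht.unit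
  -- reduction of `u`
  have hφu : LinearMap.baseChange k u = ↑su⁻¹ * gbar := by
    rw [← hφ, hudef, map_mul φ, hsuinv, hφ g]
  -- unipotence of the reduction of `u`
  have hnil : IsNilpotent (LinearMap.baseChange k u - 1) := by
    have hkey : LinearMap.baseChange k u - 1 = ↑su⁻¹ * n := by
      rw [hφu, hn_eq, mul_sub, ← hsucoe, Units.inv_mul]
    rw [hkey]
    have hcomm : Commute (↑su⁻¹ : Module.End k (k ⊗[A] V)) n := by
      refine Commute.units_inv_left ?_
      rw [hsucoe]
      exact hcomm_sn
    exact hcomm.isNilpotent_mul_left hn_nil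
  -- eigenspaces of the reduction of `t` span
  have heig : (⨆ μ : k, Module.End.eigenspace (LinearMap.baseChange k t) μ) = ⊤ := by
    rw [hφt]
    have h1 : ∀ μ : k, Module.End.eigenspace s μ = s.maxGenEigenspace μ := fun μ =>
      (hs_ss.isFinitelySemisimple.maxGenEigenspace_eq_eigenspace μ).symm
    simp_rw [h1]
    exact Module.End.iSup_maxGenEigenspace_eq_top s
  refine ⟨t, u, ht, hu, hg_eq, hcomm_tu, ⟨P, hP0, rfl⟩, heig, hnil, ?_⟩
  have hfin : LinearMap.baseChange k g = LinearMap.baseChange k (t * u) := by rw [← hg_eq]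
  rw [LinearMap.baseChange_mul] at hfin
  exact hfin
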